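/- In the positive braid monoid B_n⁺, left-divisibility (a ≼ b iff there exists c ∈ B_n⁺ with a·c = b) is a partial order, and the interval [1, Δ] = {β ∈ B_n⁺ : β ≼ Δ}, where Δ = (σ_1)(σ_2σ_1)(σ_3σ_2σ_1)⋯(σ_{n−1}⋯σ_2σ_1) is the half twist, is a lattice for ≼: any two elements of [1, Δ] have a greatest lower bound and a least upper bound within [1, Δ]. -/

import Mathlib

/-- The alternating word `i j i j ⋯` with `m` factors, in the free monoid. -/
def altWordM {α : Type*} (i j : α) : ℕ → FreeMonoid α
  | 0 => 1
  | m + 1 => FreeMonoid.of i * altWordM j i m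

/-- The braid relations associated to a Coxeter matrix, as relations on the free monoid. -/
inductive artinRelsM {B : Type*} (M : CoxeterMatrix B) :
    FreeMonoid B → FreeMonoid B → Prop
  | braid (i j : B) : M i j ≠ 0 →
      artinRelsM M (altWordM i j (M i j)) (altWordM j i (M i j))

/-- The Artin–Tits monoid of a Coxeter matrix. -/
abbrev ArtinTitsMonoid {B : Type*} (M : CoxeterMatrix B) := PresentedMonoid (artinRelsM M)

/-- The standard generators of the Artin–Tits monoid. -/
def artinσM {B : Type*} (M : CoxeterMatrix B) (i : B) : ArtinTitsMonoid M :=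
  PresentedMonoid.of (artinRelsM M) i

/-- The positive braid monoid `Bₙ⁺`, presented with generators `σ_1, …, σ_{n-1}`
(indexed by `Fin (n-1)`) and the braid relations. -/
abbrev BraidMonoid (n : ℕ) := ArtinTitsMonoid (CoxeterMatrix.Aₙ (n - 1))

/-- The standard generator `σ_{i+1}` of the positive braid monoid, for `i : Fin (n-1)`. -/
def braidσM (n : ℕ) (i : Fin (n - 1)) : BraidMonoid n := artinσM _ i

/-- The half twist `Δ = (σ₁)(σ₂σ₁)(σ₃σ₂σ₁)⋯(σ_{n-1}⋯σ₂σ₁)` in the positive braid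
monoid. -/
def braidDelta (n : ℕ) : BraidMonoid n :=
  (List.ofFn fun k : Fin (n - 1) =>
    (List.ofFn fun l : Fin ((k : ℕ) + 1) =>
      braidσM n ⟨(k : ℕ) - (l : ℕ), lt_of_le_of_lt (Nat.sub_le _ _) k.isLt⟩).prod).prod

/-- Left-divisibility in a monoid: `a ≼ b` iff `b = a·c` for some `c`. -/
def leftDvd {M : Type*} [Monoid M] (a b : M) : Prop := ∃ c, a * c = b

namespace Garside

variable {N : ℕ}

/-- adjacency of indices -/
def adj (a b : Fin N) : Prop := (a : ℕ) + 1 = b ∨ (b : ℕ) + 1 = a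

/-- distant indices -/
def dist (a b : Fin N) : Prop := a ≠ b ∧ ¬ adj a b

lemma adj.symm {a b : Fin N} (h : adj a b) : adj b a := h.elim .inr .inl

lemma dist.symm {a b : Fin N} (h : dist a b) : dist b a :=
  ⟨h.1.symm, fun hc => h.2 hc.symm⟩

lemma adj.ne {a b : Fin N} (h : adj a b) : a ≠ b := by
  rintro rfl; rcases h with h | h <;> omega

lemma eq_or_adj_or_dist (a b : Fin N) : a = b ∨ adj a b ∨ dist a b := by
  by_cases h1 : a = b
  · exact Or.inl h1
  by_cases h2 : adj a b
  · exact Or.inr (Or.inl h2)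
  · exact Or.inr (Or.inr ⟨h1, h2⟩)

/-- One-step braid rewriting on words. -/
inductive Step : List (Fin N) → List (Fin N) → Prop
  | swap (x y : List (Fin N)) {a b : Fin N} (h : dist a b) :
      Step (x ++ a :: b :: y) (x ++ b :: a :: y)
  | braid (x y : List (Fin N)) {a b : Fin N} (h : adj a b) :
      Step (x ++ a :: b :: a :: y) (x ++ b :: a :: b :: y)

/-- chains of rewriting steps of a given length -/
inductive Ch : ℕ → List (Fin N) → List (Fin N) → Prop
  | refl (a : List (Fin N)) : Ch 0 a a
  | head {k : ℕ} {a b c : List (Fin N)} : Step a b → Ch k b c → Ch (k + 1) a c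

/-- braid equivalence of words -/
def R (u v : List (Fin N)) : Prop := ∃ k, Ch k u v

lemma Step.symm {u v : List (Fin N)} (h : Step u v) : Step v u := by
  cases h with
  | swap x y h => exact .swap x y h.symm
  | braid x y h => exact .braid x y h.symm

lemma Ch.snoc {k : ℕ} {a b c : List (Fin N)} (h : Ch k a b) (h2 : Step b c) :
    Ch (k + 1) a c := by
  induction h with
  | refl a => exact .head h2 (.refl _)
  | head s _ ih => exact .head s (ih h2)

lemma Ch.symm {k : ℕ} {a b : List (Fin N)} (h : Ch k a b) : Ch k b a := by
  induction h with
  | refl a => exact .refl a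
  | head s _ ih => exact ih.snoc s.symm

lemma Ch.trans {k l : ℕ} {a b c : List (Fin N)} (h : Ch k a b) (h2 : Ch l b c) :
    Ch (k + l) a c := by
  induction h with
  | refl a => simpa using h2
  | @head k' a b' c' s hc ih =>
      have := Ch.head s (ih h2)
      simpa [Nat.add_right_comm] using this

lemma R.refl (a : List (Fin N)) : R a a := ⟨0, .refl a⟩

lemma R.symm {a b : List (Fin N)} (h : R a b) : R b a := h.imp fun _ hc => hc.symm

lemma R.trans {a b c : List (Fin N)} (h : R a b) (h2 : R b c) : R a c := by
  obtain ⟨k, hk⟩ := h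
  obtain ⟨l, hl⟩ := h2
  exact ⟨k + l, hk.trans hl⟩

end Garside


section B
namespace Garside
variable {N : ℕ}

lemma Step.append_left {u v : List (Fin N)} (x : List (Fin N)) (h : Step u v) :
    Step (x ++ u) (x ++ v) := by
  cases h with
  | swap x' y h => rw [← List.append_assoc, ← List.append_assoc]; exact .swap (x ++ x') y h
  | braid x' y h => rw [← List.append_assoc, ← List.append_assoc]; exact .braid (x ++ x') y h

lemma Step.append_right {u v : List (Fin N)} (h : Step u v) (y : List (Fin N)) :
    Step (u ++ y) (v ++ y) := by
  cases h with
  | swap x' y' h =>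
      rw [List.append_assoc, List.append_assoc]
      exact .swap x' (y' ++ y) h
  | braid x' y' h =>
      rw [List.append_assoc, List.append_assoc]
      exact .braid x' (y' ++ y) h

lemma Ch.append_left {k : ℕ} {u v : List (Fin N)} (x : List (Fin N)) (h : Ch k u v) :
    Ch k (x ++ u) (x ++ v) := by
  induction h with
  | refl a => exact .refl _
  | head s _ ih => exact .head (s.append_left x) ih

lemma Ch.append_right {k : ℕ} {u v : List (Fin N)} (h : Ch k u v) (y : List (Fin N)) :
    Ch k (u ++ y) (v ++ y) := by
  induction h with
  | refl a => exact .refl _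
  | head s _ ih => exact .head (s.append_right y) ih

lemma R.append_left {u v : List (Fin N)} (x : List (Fin N)) (h : R u v) :
    R (x ++ u) (x ++ v) := h.imp fun _ hc => hc.append_left x

lemma R.append_right {u v : List (Fin N)} (h : R u v) (y : List (Fin N)) :
    R (u ++ y) (v ++ y) := h.imp fun _ hc => hc.append_right y

lemma R.cons (a : Fin N) {u v : List (Fin N)} (h : R u v) : R (a :: u) (a :: v) :=
  h.append_left [a]

lemma R.append {u v u' v' : List (Fin N)} (h : R u u') (h2 : R v v') :
    R (u ++ v) (u' ++ v') := (h.append_right v).trans (h2.append_left u')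

/-- elementary swap at the head -/
lemma R.sw {a b : Fin N} (h : dist a b) (t : List (Fin N)) :
    R (a :: b :: t) (b :: a :: t) := ⟨1, .head (Step.swap [] t h) (.refl _)⟩

/-- elementary braid move at the head -/
lemma R.br {a b : Fin N} (h : adj a b) (t : List (Fin N)) :
    R (a :: b :: a :: t) (b :: a :: b :: t) := ⟨1, .head (Step.braid [] t h) (.refl _)⟩

instance : Trans (R (N := N)) (R (N := N)) (R (N := N)) := ⟨R.trans⟩

lemma Step.length_eq {u v : List (Fin N)} (h : Step u v) : u.length = v.length := by
  cases h <;> simp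

lemma Ch.length_eq {k : ℕ} {u v : List (Fin N)} (h : Ch k u v) : u.length = v.length := by
  induction h with
  | refl a => rfl
  | head s _ ih => exact s.length_eq.trans ih

lemma R.length_eq {u v : List (Fin N)} (h : R u v) : u.length = v.length := by
  obtain ⟨k, hk⟩ := h; exact hk.length_eq

/-- inversion of a step on a word with explicit head -/
lemma step_cons_cases {c : Fin N} {w z : List (Fin N)} (h : Step (c :: w) z) :
    (∃ w', z = c :: w' ∧ Step w w') ∨
    (∃ b y, dist c b ∧ w = b :: y ∧ z = b :: c :: y) ∨
    (∃ b y, adj c b ∧ w = b :: c :: y ∧ z = b :: c :: b :: y) := by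
  generalize hl : c :: w = lhs at h
  cases h with
  | @swap x y a b h =>
      cases x with
      | nil =>
          simp only [List.nil_append] at hl ⊢
          injection hl with h1 h2
          subst h1; subst h2
          exact Or.inr <| Or.inl ⟨b, y, h, rfl, rfl⟩
      | cons d x' =>
          simp only [List.cons_append] at hl
          injection hl with h1 h2
          subst h1; subst h2
          exact Or.inl ⟨x' ++ b :: a :: y, rfl, .swap x' y h⟩
  | @braid x y a b h =>
      cases x with
      | nil =>
          simp only [List.nil_append] at hl ⊢
          injection hl with h1 h2
          subst h1; subst h2
          exact Or.inr <| Or.inr ⟨b, y, h, rfl, rfl⟩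
      | cons d x' =>
          simp only [List.cons_append] at hl
          injection hl with h1 h2
          subst h1; subst h2
          exact Or.inl ⟨x' ++ b :: a :: b :: y, rfl, .braid x' y h⟩

end Garside
end B


namespace Garside
variable {N : ℕ}

scoped infix:50 " ≋ " => Garside.R

instance (a b : Fin N) : Decidable (adj a b) := by unfold adj; exact inferInstance

/-- the complement: `a * comp a b` is the lcm of the generators `a`, `b`. -/
def comp (a b : Fin N) : List (Fin N) :=
  if a = b then [] else if adj a b then [b, a] else [b]

lemma comp_self (a : Fin N) : comp a a = [] := by simp [comp]

lemma comp_adj {a b : Fin N} (h : adj a b) : comp a b = [b, a] := by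
  simp [comp, h, h.ne]

lemma comp_dist {a b : Fin N} (h : dist a b) : comp a b = [b] := by
  simp [comp, h.1, h.2]

lemma adj_adj_adj_false {a b c : Fin N} (h1 : adj a b) (h2 : adj b c) (h3 : adj a c) :
    False := by
  rcases h1 with h1 | h1 <;> rcases h2 with h2 | h2 <;> rcases h3 with h3 | h3 <;> omega

theorem key (n : ℕ) : ∀ (u v : List (Fin N)) (a b : Fin N), u.length ≤ n →
    R (a :: u) (b :: v) → ∃ w, R u (comp a b ++ w) ∧ R v (comp b a ++ w) := by
  induction n using Nat.strong_induction_on with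
  | _ n IH =>
  suffices H : ∀ (k : ℕ) (u v : List (Fin N)) (a b : Fin N), u.length ≤ n →
      Ch k (a :: u) (b :: v) → ∃ w, R u (comp a b ++ w) ∧ R v (comp b a ++ w) by
    rintro u v a b hu ⟨k, hk⟩
    exact H k u v a b hu hk
  intro k
  induction k with
  | zero =>
      intro u v a b hu hch
      cases hch
      exact ⟨u, by simpa [comp_self] using R.refl u, by simpa [comp_self] using R.refl u⟩
  | succ k ihk =>
      intro u v a b hu hch
      cases hch with
      | head hs hc =>
        rcases step_cons_cases hs with ⟨u₁, rfl, hstep⟩ | ⟨c, y, hac, rfl, rfl⟩ |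
          ⟨c, y, hac, rfl, rfl⟩
        -- Case A : interior step
        · have hlen : u₁.length ≤ n := by
            have := hstep.length_eq; omega
          obtain ⟨w, h1, h2⟩ := ihk u₁ v a b hlen hc
          exact ⟨w, R.trans ⟨1, .head hstep (.refl _)⟩ h1, h2⟩
        -- Case B2 : step at front with distant letters; u = c :: y
        · simp only [List.length_cons] at hu
          have key' := IH (n - 1) (by omega)
          obtain ⟨w₁, ht, hv⟩ := ihk (a :: y) v c b (by simp; omega) hc
          by_cases hbc : b = c
          · -- b = c
            subst hbc
            rw [comp_self, List.nil_append] at ht hv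
            refine ⟨y, by simpa [comp_dist hac] using R.refl _, ?_⟩
            rw [comp_dist hac.symm]
            exact (hv.trans ht.symm : _)
          · by_cases hba : b = a
            · -- b = a
              subst hba
              rw [comp_dist hac.symm] at ht
              rw [comp_dist hac] at hv
              simp only [List.cons_append, List.nil_append] at ht hv
              obtain ⟨w₂, h1, h2⟩ := key' y w₁ b b (by omega) ht
              rw [comp_self, List.nil_append] at h1 h2
              have hyw : R y w₁ := h1.trans h2.symm
              refine ⟨c :: y, by simpa [comp_self] using R.refl _, ?_⟩
              rw [comp_self, List.nil_append]
              exact hv.trans (hyw.symm.cons c)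
            · have hab : adj a b ∨ dist a b :=
                (eq_or_adj_or_dist a b).resolve_left (fun h => hba h.symm)
              have hbc' : adj b c ∨ dist b c :=
                (eq_or_adj_or_dist b c).resolve_left hbc
              rcases hab with hab | hab <;> rcases hbc' with hbc' | hbc'
              · -- B2-v : adj a b, adj b c
                rw [comp_adj hbc'.symm] at ht
                rw [comp_adj hbc'] at hv
                simp only [List.cons_append, List.nil_append] at ht hv
                have hl1 := ht.length_eq; simp only [List.length_cons] at hl1
                obtain ⟨w₂, h1, h2⟩ := key' y (c :: w₁) a b (by omega) ht
                rw [comp_adj hab] at h1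
                rw [comp_adj hab.symm] at h2
                simp only [List.cons_append, List.nil_append] at h1 h2
                have hl2 := h2.length_eq; simp only [List.length_cons] at hl2
                obtain ⟨w₃, h3, h4⟩ := key' w₁ (b :: w₂) c a (by omega) h2
                rw [comp_dist hac.symm] at h3
                rw [comp_dist hac] at h4
                simp only [List.cons_append, List.nil_append] at h3 h4
                have hl4 := h4.length_eq; simp only [List.length_cons] at hl4
                obtain ⟨w₄, h5, h6⟩ := key' w₂ w₃ b c (by omega) h4
                rw [comp_adj hbc'] at h5
                rw [comp_adj hbc'.symm] at h6
                simp only [List.cons_append, List.nil_append] at h5 h6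
                refine ⟨c :: b :: a :: w₄, ?_, ?_⟩
                · rw [comp_adj hab]
                  simp only [List.cons_append, List.nil_append]
                  calc c :: y ≋ c :: b :: a :: w₂ := h1.cons c
                    _ ≋ c :: b :: a :: c :: b :: w₄ := ((h5.cons a).cons b).cons c
                    _ ≋ c :: b :: c :: a :: b :: w₄ := ((R.sw hac (b :: w₄)).cons b).cons c
                    _ ≋ b :: c :: b :: a :: b :: w₄ := R.br hbc'.symm (a :: b :: w₄)
                    _ ≋ b :: c :: a :: b :: a :: w₄ := ((R.br hab.symm w₄).cons c).cons b
                    _ ≋ b :: a :: c :: b :: a :: w₄ := (R.sw hac.symm (b :: a :: w₄)).cons b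
                · rw [comp_adj hab.symm]
                  simp only [List.cons_append, List.nil_append]
                  calc v ≋ c :: b :: w₁ := hv
                    _ ≋ c :: b :: a :: w₃ := (h3.cons b).cons c
                    _ ≋ c :: b :: a :: b :: c :: w₄ := ((h6.cons a).cons b).cons c
                    _ ≋ c :: a :: b :: a :: c :: w₄ := (R.br hab.symm (c :: w₄)).cons c
                    _ ≋ a :: c :: b :: a :: c :: w₄ := R.sw hac.symm (b :: a :: c :: w₄)
                    _ ≋ a :: c :: b :: c :: a :: w₄ := (((R.sw hac w₄).cons b).cons c).cons a
                    _ ≋ a :: b :: c :: b :: a :: w₄ := (R.br hbc'.symm (a :: w₄)).cons a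
              · -- B2-iii : adj a b, dist b c
                rw [comp_dist hbc'.symm] at ht
                rw [comp_dist hbc'] at hv
                simp only [List.cons_append, List.nil_append] at ht hv
                obtain ⟨w₂, h1, h2⟩ := key' y w₁ a b (by omega) ht
                rw [comp_adj hab] at h1
                rw [comp_adj hab.symm] at h2
                simp only [List.cons_append, List.nil_append] at h1 h2
                refine ⟨c :: w₂, ?_, ?_⟩
                · rw [comp_adj hab]
                  simp only [List.cons_append, List.nil_append]
                  calc c :: y ≋ c :: b :: a :: w₂ := h1.cons c
                    _ ≋ b :: c :: a :: w₂ := R.sw hbc'.symm (a :: w₂)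
                    _ ≋ b :: a :: c :: w₂ := (R.sw hac.symm (w₂)).cons b
                · rw [comp_adj hab.symm]
                  simp only [List.cons_append, List.nil_append]
                  calc v ≋ c :: w₁ := hv
                    _ ≋ c :: a :: b :: w₂ := h2.cons c
                    _ ≋ a :: c :: b :: w₂ := R.sw hac.symm (b :: w₂)
                    _ ≋ a :: b :: c :: w₂ := (R.sw hbc'.symm w₂).cons a
              · -- B2-iv : dist a b, adj b c
                rw [comp_adj hbc'.symm] at ht
                rw [comp_adj hbc'] at hv
                simp only [List.cons_append, List.nil_append] at ht hv
                have hl1 := ht.length_eq; simp only [List.length_cons] at hl1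
                obtain ⟨w₂, h1, h2⟩ := key' y (c :: w₁) a b (by omega) ht
                rw [comp_dist hab] at h1
                rw [comp_dist hab.symm] at h2
                simp only [List.cons_append, List.nil_append] at h1 h2
                obtain ⟨w₃, h3, h4⟩ := key' w₁ w₂ c a (by omega) h2
                rw [comp_dist hac.symm] at h3
                rw [comp_dist hac] at h4
                simp only [List.cons_append, List.nil_append] at h3 h4
                refine ⟨c :: b :: w₃, ?_, ?_⟩
                · rw [comp_dist hab]
                  simp only [List.cons_append, List.nil_append]
                  calc c :: y ≋ c :: b :: w₂ := h1.cons c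
                    _ ≋ c :: b :: c :: w₃ := (h4.cons b).cons c
                    _ ≋ b :: c :: b :: w₃ := R.br hbc'.symm w₃
                · rw [comp_dist hab.symm]
                  simp only [List.cons_append, List.nil_append]
                  calc v ≋ c :: b :: w₁ := hv
                    _ ≋ c :: b :: a :: w₃ := (h3.cons b).cons c
                    _ ≋ c :: a :: b :: w₃ := (R.sw hab.symm w₃).cons c
                    _ ≋ a :: c :: b :: w₃ := R.sw hac.symm (b :: w₃)
              · -- B2-i : dist a b, dist b c
                rw [comp_dist hbc'.symm] at ht
                rw [comp_dist hbc'] at hv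
                simp only [List.cons_append, List.nil_append] at ht hv
                obtain ⟨w₂, h1, h2⟩ := key' y w₁ a b (by omega) ht
                rw [comp_dist hab] at h1
                rw [comp_dist hab.symm] at h2
                simp only [List.cons_append, List.nil_append] at h1 h2
                refine ⟨c :: w₂, ?_, ?_⟩
                · rw [comp_dist hab]
                  simp only [List.cons_append, List.nil_append]
                  calc c :: y ≋ c :: b :: w₂ := h1.cons c
                    _ ≋ b :: c :: w₂ := R.sw hbc'.symm w₂
                · rw [comp_dist hab.symm]
                  simp only [List.cons_append, List.nil_append]
                  calc v ≋ c :: w₁ := hv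
                    _ ≋ c :: a :: w₂ := h2.cons c
                    _ ≋ a :: c :: w₂ := R.sw hac.symm w₂
        -- Case B3 : step at front with adjacent letters; u = c :: a :: y
        · simp only [List.length_cons] at hu
          have key' := IH (n - 1) (by omega)
          obtain ⟨w₁, ht, hv⟩ := ihk (a :: c :: y) v c b (by simp; omega) hc
          by_cases hbc : b = c
          · -- b = c
            subst hbc
            rw [comp_self, List.nil_append] at ht hv
            refine ⟨y, by simpa [comp_adj hac] using R.refl _, ?_⟩
            rw [comp_adj hac.symm]
            simp only [List.cons_append, List.nil_append]
            exact (hv.trans ht.symm : _)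
          · by_cases hba : b = a
            · -- b = a
              subst hba
              rw [comp_adj hac.symm] at ht
              rw [comp_adj hac] at hv
              simp only [List.cons_append, List.nil_append] at ht hv
              obtain ⟨w₂, h1, h2⟩ := key' (c :: y) (c :: w₁) b b (by simp; omega) ht
              rw [comp_self, List.nil_append] at h1 h2
              have h12 : R (c :: y) (c :: w₁) := h1.trans h2.symm
              obtain ⟨w₃, h3, h4⟩ := key' y w₁ c c (by omega) h12
              rw [comp_self, List.nil_append] at h3 h4
              have hyw : R y w₁ := h3.trans h4.symm
              refine ⟨c :: b :: y, by simpa [comp_self] using R.refl _, ?_⟩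
              rw [comp_self, List.nil_append]
              calc v ≋ c :: b :: w₁ := hv
                _ ≋ c :: b :: y := (hyw.symm.cons b).cons c
            · have hab : adj a b ∨ dist a b :=
                (eq_or_adj_or_dist a b).resolve_left (fun h => hba h.symm)
              have hbc' : adj b c ∨ dist b c :=
                (eq_or_adj_or_dist b c).resolve_left hbc
              rcases hab with hab | hab <;> rcases hbc' with hbc' | hbc'
              · -- B3 : adj a b, adj b c, adj a c : impossible
                exact absurd hac (fun h => adj_adj_adj_false hab hbc' h)
              · -- B3 : adj a b, dist b c
                rw [comp_dist hbc'.symm] at ht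
                rw [comp_dist hbc'] at hv
                simp only [List.cons_append, List.nil_append] at ht hv
                have hl1 := ht.length_eq; simp only [List.length_cons] at hl1
                obtain ⟨w₂, h1, h2⟩ := key' (c :: y) w₁ a b (by simp; omega) ht
                rw [comp_adj hab] at h1
                rw [comp_adj hab.symm] at h2
                simp only [List.cons_append, List.nil_append] at h1 h2
                have hl2 := h1.length_eq; simp only [List.length_cons] at hl2
                obtain ⟨w₃, h3, h4⟩ := key' y (a :: w₂) c b (by omega) h1
                rw [comp_dist hbc'.symm] at h3
                rw [comp_dist hbc'] at h4
                simp only [List.cons_append, List.nil_append] at h3 h4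
                have hl4 := h4.length_eq; simp only [List.length_cons] at hl4
                obtain ⟨w₄, h5, h6⟩ := key' w₂ w₃ a c (by omega) h4
                rw [comp_adj hac] at h5
                rw [comp_adj hac.symm] at h6
                simp only [List.cons_append, List.nil_append] at h5 h6
                refine ⟨c :: a :: b :: w₄, ?_, ?_⟩
                · rw [comp_adj hab]
                  simp only [List.cons_append, List.nil_append]
                  calc c :: a :: y ≋ c :: a :: b :: w₃ := (h3.cons a).cons c
                    _ ≋ c :: a :: b :: a :: c :: w₄ := ((h6.cons b).cons a).cons c
                    _ ≋ c :: b :: a :: b :: c :: w₄ := (R.br hab (c :: w₄)).cons c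
                    _ ≋ b :: c :: a :: b :: c :: w₄ := R.sw hbc'.symm (a :: b :: c :: w₄)
                    _ ≋ b :: c :: a :: c :: b :: w₄ := (((R.sw hbc' w₄).cons a).cons c).cons b
                    _ ≋ b :: a :: c :: a :: b :: w₄ := (R.br hac.symm (b :: w₄)).cons b
                · rw [comp_adj hab.symm]
                  simp only [List.cons_append, List.nil_append]
                  calc v ≋ c :: w₁ := hv
                    _ ≋ c :: a :: b :: w₂ := h2.cons c
                    _ ≋ c :: a :: b :: c :: a :: w₄ := ((h5.cons b).cons a).cons c
                    _ ≋ c :: a :: c :: b :: a :: w₄ := ((R.sw hbc' (a :: w₄)).cons a).cons c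
                    _ ≋ a :: c :: a :: b :: a :: w₄ := R.br hac.symm (b :: a :: w₄)
                    _ ≋ a :: c :: b :: a :: b :: w₄ := ((R.br hab w₄).cons c).cons a
                    _ ≋ a :: b :: c :: a :: b :: w₄ := (R.sw hbc'.symm (a :: b :: w₄)).cons a
              · -- B3 : dist a b, adj b c
                rw [comp_adj hbc'.symm] at ht
                rw [comp_adj hbc'] at hv
                simp only [List.cons_append, List.nil_append] at ht hv
                have hl1 := ht.length_eq; simp only [List.length_cons] at hl1
                obtain ⟨w₂, h1, h2⟩ := key' (c :: y) (c :: w₁) a b (by simp; omega) ht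
                rw [comp_dist hab] at h1
                rw [comp_dist hab.symm] at h2
                simp only [List.cons_append, List.nil_append] at h1 h2
                obtain ⟨w₃, h3, h4⟩ := key' y w₂ c b (by omega) h1
                rw [comp_adj hbc'.symm] at h3
                rw [comp_adj hbc'] at h4
                simp only [List.cons_append, List.nil_append] at h3 h4
                have hl2 := h2.length_eq; simp only [List.length_cons] at hl2
                obtain ⟨w₄, h5, h6⟩ := key' w₁ w₂ c a (by omega) h2
                rw [comp_adj hac.symm] at h5
                rw [comp_adj hac] at h6
                simp only [List.cons_append, List.nil_append] at h5 h6
                have h46 : R (b :: w₃) (a :: w₄) := by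
                  have hcc : R (c :: b :: w₃) (c :: a :: w₄) := h4.symm.trans h6
                  obtain ⟨w₅', g1, g2⟩ := key' (b :: w₃) (a :: w₄) c c (by
                    have := h4.length_eq; simp only [List.length_cons] at this
                    simp only [List.length_cons]; omega) hcc
                  rw [comp_self, List.nil_append] at g1 g2
                  exact g1.trans g2.symm
                obtain ⟨w₅, h7, h8⟩ := key' w₃ w₄ b a (by
                  have := h4.length_eq; simp only [List.length_cons] at this; omega) h46
                rw [comp_dist hab.symm] at h7
                rw [comp_dist hab] at h8
                simp only [List.cons_append, List.nil_append] at h7 h8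
                refine ⟨c :: b :: a :: c :: w₅, ?_, ?_⟩
                · rw [comp_dist hab]
                  simp only [List.cons_append, List.nil_append]
                  calc c :: a :: y ≋ c :: a :: b :: c :: w₃ := ((h3.cons a)).cons c
                    _ ≋ c :: a :: b :: c :: a :: w₅ := (((h7.cons c).cons b).cons a).cons c
                    _ ≋ c :: b :: a :: c :: a :: w₅ := (R.sw hab (c :: a :: w₅)).cons c
                    _ ≋ c :: b :: c :: a :: c :: w₅ := ((R.br hac w₅).cons b).cons c
                    _ ≋ b :: c :: b :: a :: c :: w₅ := R.br hbc'.symm (a :: c :: w₅)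
                · rw [comp_dist hab.symm]
                  simp only [List.cons_append, List.nil_append]
                  calc v ≋ c :: b :: w₁ := hv
                    _ ≋ c :: b :: a :: c :: w₄ := ((h5.cons b)).cons c
                    _ ≋ c :: b :: a :: c :: b :: w₅ := (((h8.cons c).cons a).cons b).cons c
                    _ ≋ c :: a :: b :: c :: b :: w₅ := (R.sw hab.symm (c :: b :: w₅)).cons c
                    _ ≋ c :: a :: c :: b :: c :: w₅ := ((R.br hbc' w₅).cons a).cons c
                    _ ≋ a :: c :: a :: b :: c :: w₅ := R.br hac.symm (b :: c :: w₅)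
                    _ ≋ a :: c :: b :: a :: c :: w₅ := ((R.sw hab (c :: w₅)).cons c).cons a
              · -- B3 : dist a b, dist b c
                rw [comp_dist hbc'.symm] at ht
                rw [comp_dist hbc'] at hv
                simp only [List.cons_append, List.nil_append] at ht hv
                obtain ⟨w₂, h1, h2⟩ := key' (c :: y) w₁ a b (by simp; omega) ht
                rw [comp_dist hab] at h1
                rw [comp_dist hab.symm] at h2
                simp only [List.cons_append, List.nil_append] at h1 h2
                obtain ⟨w₃, h3, h4⟩ := key' y w₂ c b (by omega) h1
                rw [comp_dist hbc'.symm] at h3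
                rw [comp_dist hbc'] at h4
                simp only [List.cons_append, List.nil_append] at h3 h4
                refine ⟨c :: a :: w₃, ?_, ?_⟩
                · rw [comp_dist hab]
                  simp only [List.cons_append, List.nil_append]
                  calc c :: a :: y ≋ c :: a :: b :: w₃ := (h3.cons a).cons c
                    _ ≋ c :: b :: a :: w₃ := (R.sw hab w₃).cons c
                    _ ≋ b :: c :: a :: w₃ := R.sw hbc'.symm (a :: w₃)
                · rw [comp_dist hab.symm]
                  simp only [List.cons_append, List.nil_append]
                  calc v ≋ c :: w₁ := hv
                    _ ≋ c :: a :: w₂ := h2.cons c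
                    _ ≋ c :: a :: c :: w₃ := (h4.cons a).cons c
                    _ ≋ a :: c :: a :: w₃ := R.br hac.symm w₃

end Garside


namespace Garside
variable {N : ℕ}
open FreeMonoid

abbrev rels (N : ℕ) := artinRelsM (CoxeterMatrix.Aₙ N)
abbrev PB (N : ℕ) := PresentedMonoid (rels N)

lemma matrix_apply (a b : Fin N) :
    (CoxeterMatrix.Aₙ N) a b = if a = b then 1 else if adj a b then 3 else 2 := by
  show (if a = b then 1 else if ((b : ℕ) + 1 = a ∨ (a : ℕ) + 1 = b) then 3 else 2) = _
  rcases eq_or_ne a b with rfl | h1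
  · simp
  · by_cases h2 : adj a b
    · have h3 : ((b : ℕ) + 1 = a ∨ (a : ℕ) + 1 = b) := h2.elim Or.inr Or.inl
      simp [h1, h2, h3]
    · have h3 : ¬ ((b : ℕ) + 1 = a ∨ (a : ℕ) + 1 = b) := fun hc => h2 (hc.elim Or.inr Or.inl)
      simp [h1, h2, h3]

lemma matrix_self (a : Fin N) : (CoxeterMatrix.Aₙ N) a a = 1 := by
  simp [matrix_apply]

lemma matrix_adj {a b : Fin N} (h : adj a b) : (CoxeterMatrix.Aₙ N) a b = 3 := by
  simp [matrix_apply, h, h.ne]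

lemma matrix_dist {a b : Fin N} (h : dist a b) : (CoxeterMatrix.Aₙ N) a b = 2 := by
  simp [matrix_apply, h.1, h.2]

lemma alt_one (i j : Fin N) : altWordM i j 1 = ofList [i] := rfl
lemma alt_two (i j : Fin N) : altWordM i j 2 = ofList [i, j] := rfl
lemma alt_three (i j : Fin N) : altWordM i j 3 = ofList [i, j, i] := rfl

lemma rel_R {u v : FreeMonoid (Fin N)} (h : rels N u v) : R u.toList v.toList := by
  cases h with
  | braid i j hne =>
    rcases eq_or_adj_or_dist i j with rfl | hij | hij
    · rw [matrix_self]; exact R.refl _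
    · rw [matrix_adj hij, alt_three, alt_three]
      exact R.br hij []
    · rw [matrix_dist hij, alt_two, alt_two]
      exact R.sw hij []

lemma step_conGen {u v : List (Fin N)} (h : Step u v) :
    conGen (rels N) (ofList u) (ofList v) := by
  cases h with
  | @swap x y a b hab =>
      have h2 : (CoxeterMatrix.Aₙ N) a b = 2 := matrix_dist hab
      have hr : rels N (altWordM a b 2) (altWordM b a 2) := by
        have := artinRelsM.braid (M := CoxeterMatrix.Aₙ N) a b (by rw [h2]; norm_num)
        rwa [h2] at this
      have e1 : ofList (x ++ a :: b :: y) = ofList x * altWordM a b 2 * ofList y := by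
        rw [alt_two, ← ofList_append, ← ofList_append]; simp
      have e2 : ofList (x ++ b :: a :: y) = ofList x * altWordM b a 2 * ofList y := by
        rw [alt_two, ← ofList_append, ← ofList_append]; simp
      rw [e1, e2]
      exact (conGen (rels N)).mul ((conGen (rels N)).mul ((conGen (rels N)).refl _)
        (ConGen.Rel.of _ _ hr)) ((conGen (rels N)).refl _)
  | @braid x y a b hab =>
      have h2 : (CoxeterMatrix.Aₙ N) a b = 3 := matrix_adj hab
      have hr : rels N (altWordM a b 3) (altWordM b a 3) := by
        have := artinRelsM.braid (M := CoxeterMatrix.Aₙ N) a b (by rw [h2]; norm_num)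
        rwa [h2] at this
      have e1 : ofList (x ++ a :: b :: a :: y) = ofList x * altWordM a b 3 * ofList y := by
        rw [alt_three, ← ofList_append, ← ofList_append]; simp
      have e2 : ofList (x ++ b :: a :: b :: y) = ofList x * altWordM b a 3 * ofList y := by
        rw [alt_three, ← ofList_append, ← ofList_append]; simp
      rw [e1, e2]
      exact (conGen (rels N)).mul ((conGen (rels N)).mul ((conGen (rels N)).refl _)
        (ConGen.Rel.of _ _ hr)) ((conGen (rels N)).refl _)

lemma conGen_iff {u v : FreeMonoid (Fin N)} :
    conGen (rels N) u v ↔ R u.toList v.toList := by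
  constructor
  · intro h
    have h' : ConGen.Rel (rels N) u v := h
    clear h
    induction h' with
    | of x y h => exact rel_R h
    | refl => exact R.refl _
    | symm _ ih => exact ih.symm
    | trans _ _ ih1 ih2 => exact ih1.trans ih2
    | mul _ _ ih1 ih2 => simpa only [toList_mul] using ih1.append ih2
  · rintro ⟨k, hk⟩
    have main : ∀ {k} {p q : List (Fin N)}, Ch k p q →
        conGen (rels N) (ofList p) (ofList q) := by
      intro k p q h
      induction h with
      | refl a => exact (conGen (rels N)).refl _
      | head hs _ ih => exact (conGen (rels N)).trans (step_conGen hs) ih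
    simpa [ofList_toList] using main hk

/-- quotient map from words -/
def mkw (l : List (Fin N)) : PB N := PresentedMonoid.mk (rels N) (ofList l)

lemma mkw_eq_iff {u v : List (Fin N)} : mkw u = mkw v ↔ R u v := by
  refine Iff.trans ?_ (conGen_iff (u := ofList u) (v := ofList v))
  exact Con.eq _

lemma mkw_append (u v : List (Fin N)) : mkw (u ++ v) = mkw u * mkw v := by
  unfold mkw
  rw [ofList_append, map_mul]

lemma mkw_nil : (mkw [] : PB N) = 1 := rfl

lemma exists_rep (x : PB N) : ∃ l, x = mkw l := by
  induction x using PresentedMonoid.inductionOn with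
  | _ a => exact ⟨a.toList, by simp [mkw, ofList_toList]⟩

/-- length of alternating words -/
lemma lift_alt (m : ℕ) : ∀ (i j : Fin N),
    FreeMonoid.lift (fun _ : Fin N => Multiplicative.ofAdd (1 : ℕ)) (altWordM i j m) =
      Multiplicative.ofAdd m := by
  induction m with
  | zero => intro i j; rfl
  | succ m ih =>
      intro i j
      show FreeMonoid.lift _ (FreeMonoid.of i * altWordM j i m) = _
      rw [map_mul, ih j i, FreeMonoid.lift_eval_of]
      rw [← ofAdd_add, Nat.add_comm]

/-- the length homomorphism -/
def lenHom : PB N →* Multiplicative ℕ :=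
  PresentedMonoid.lift (fun _ => Multiplicative.ofAdd 1) (by
    intro a b h
    cases h with
    | braid i j hne => rw [lift_alt, lift_alt])

def len (x : PB N) : ℕ := Multiplicative.toAdd (lenHom x)

lemma len_mul (x y : PB N) : len (x * y) = len x + len y := by
  unfold len; rw [map_mul]; rfl

lemma len_one : len (1 : PB N) = 0 := by
  unfold len; rw [map_one]; rfl

lemma len_mkw (l : List (Fin N)) : len (mkw l) = l.length := by
  induction l with
  | nil => exact len_one
  | cons a t ih =>
      have : mkw (a :: t) = mkw [a] * mkw t := by
        rw [← mkw_append]; rfl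
      rw [this, len_mul, ih]
      have : len (mkw [a] : PB N) = 1 := by
        unfold len lenHom mkw
        show Multiplicative.toAdd (PresentedMonoid.lift _ _ (PresentedMonoid.of _ a)) = 1
        rw [PresentedMonoid.lift_of]
        rfl
      rw [this, List.length_cons]
      omega

lemma eq_one_of_len_eq_zero {x : PB N} (h : len x = 0) : x = 1 := by
  obtain ⟨l, rfl⟩ := exists_rep x
  rw [len_mkw] at h
  rw [List.length_eq_zero_iff] at h
  subst h
  rfl

end Garside


namespace Garside
variable {N : ℕ}
open FreeMonoid

lemma mkw_cons (a : Fin N) (l : List (Fin N)) : mkw (a :: l) = mkw [a] * mkw l := by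
  rw [← mkw_append]; rfl

/-- cancellation of a generator on the left -/
lemma cancel_gen {i : Fin N} {x y : PB N} (h : mkw [i] * x = mkw [i] * y) : x = y := by
  obtain ⟨u, rfl⟩ := exists_rep x
  obtain ⟨v, rfl⟩ := exists_rep y
  rw [← mkw_cons, ← mkw_cons, mkw_eq_iff] at h
  obtain ⟨w, h1, h2⟩ := key u.length u v i i le_rfl h
  rw [comp_self, List.nil_append] at h1 h2
  rw [mkw_eq_iff]
  exact h1.trans h2.symm

/-- the positive braid monoid is left cancellative -/
lemma left_cancel {c x y : PB N} (h : c * x = c * y) : x = y := by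
  obtain ⟨u, rfl⟩ := exists_rep c
  induction u generalizing x y with
  | nil => simpa [mkw_nil] using h
  | cons a t ih =>
      rw [mkw_cons, mul_assoc, mul_assoc] at h
      exact ih (cancel_gen h)

/-- the key lemma at the monoid level -/
lemma keyM {i j : Fin N} {x y : PB N} (h : mkw [i] * x = mkw [j] * y) :
    ∃ t, x = mkw (comp i j) * t ∧ y = mkw (comp j i) * t := by
  obtain ⟨u, rfl⟩ := exists_rep x
  obtain ⟨v, rfl⟩ := exists_rep y
  rw [← mkw_cons, ← mkw_cons, mkw_eq_iff] at h
  obtain ⟨w, h1, h2⟩ := key u.length u v i j le_rfl h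
  refine ⟨mkw w, ?_, ?_⟩
  · rw [← mkw_append, mkw_eq_iff]; exact h1
  · rw [← mkw_append, mkw_eq_iff]; exact h2

/-- the braid relation at the monoid level -/
lemma compM_rel (i j : Fin N) : mkw [i] * mkw (comp i j) = mkw [j] * mkw (comp j i) := by
  rcases eq_or_adj_or_dist i j with rfl | hij | hij
  · rfl
  · rw [comp_adj hij, comp_adj hij.symm, ← mkw_append, ← mkw_append, mkw_eq_iff]
    exact R.br hij []
  · rw [comp_dist hij, comp_dist hij.symm, ← mkw_append, ← mkw_append, mkw_eq_iff]
    exact R.sw hij []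

/- left-divisibility basics -/
lemma dvd_refl (x : PB N) : leftDvd x x := ⟨1, mul_one x⟩
lemma one_dvd (x : PB N) : leftDvd 1 x := ⟨x, one_mul x⟩
lemma dvd_trans {x y z : PB N} (h1 : leftDvd x y) (h2 : leftDvd y z) : leftDvd x z := by
  obtain ⟨c, rfl⟩ := h1; obtain ⟨d, rfl⟩ := h2; exact ⟨c * d, (mul_assoc _ _ _).symm⟩
lemma dvd_mul_right (x y : PB N) : leftDvd x (x * y) := ⟨y, rfl⟩
lemma mul_dvd_mul_left (x : PB N) {y z : PB N} (h : leftDvd y z) :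
    leftDvd (x * y) (x * z) := by
  obtain ⟨c, rfl⟩ := h; exact ⟨c, mul_assoc _ _ _⟩
lemma dvd_of_mul_dvd_mul_left {x y z : PB N} (h : leftDvd (x * y) (x * z)) : leftDvd y z := by
  obtain ⟨c, hc⟩ := h
  rw [mul_assoc] at hc
  exact ⟨c, left_cancel hc⟩
lemma len_le_of_dvd {x y : PB N} (h : leftDvd x y) : len x ≤ len y := by
  obtain ⟨c, rfl⟩ := h; rw [len_mul]; omega
lemma eq_one_of_dvd_one {x : PB N} (h : leftDvd x 1) : x = 1 := by
  have := len_le_of_dvd h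
  rw [len_one] at this
  exact eq_one_of_len_eq_zero (by omega)

/-- least common multiple predicate (for left-divisibility) -/
def isLCM (x y m : PB N) : Prop :=
  leftDvd x m ∧ leftDvd y m ∧ ∀ z, leftDvd x z → leftDvd y z → leftDvd m z

lemma decomp {x : PB N} (h : x ≠ 1) : ∃ (i : Fin N) (x' : PB N), x = mkw [i] * x' := by
  obtain ⟨l, rfl⟩ := exists_rep x
  cases l with
  | nil => exact absurd rfl h
  | cons a t => exact ⟨a, mkw t, mkw_cons a t⟩

/-- conditional lcm: any two elements admitting a common right multiple have an lcm -/
theorem lcm_exists : ∀ (k : ℕ) (z x y : PB N), len z ≤ k →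
    leftDvd x z → leftDvd y z → ∃ m, isLCM x y m := by
  intro k
  induction k using Nat.strong_induction_on with
  | _ k IH =>
  -- first, the case of a generator
  have T : ∀ (z : PB N) (i : Fin N) (y : PB N), len z ≤ k →
      leftDvd (mkw [i]) z → leftDvd y z → ∃ m, isLCM (mkw [i]) y m := by
    intro z i y hz hiz hyz
    by_cases hy1 : y = 1
    · subst hy1
      exact ⟨mkw [i], dvd_refl _, one_dvd _, fun z' h1 _ => h1⟩
    obtain ⟨j, y₁, rfl⟩ := decomp hy1
    obtain ⟨c, hc⟩ := hiz
    obtain ⟨d, hd⟩ := hyz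
    rw [mul_assoc] at hd
    have hk1 : 1 ≤ k := by
      have := len_le_of_dvd ⟨c, hc⟩
      have h1 : len (mkw [i] : PB N) = 1 := by rw [len_mkw]; rfl
      omega
    obtain ⟨t, ht1, ht2⟩ := keyM (hc.trans hd.symm)
    -- z₁ := y₁ * d
    have hz1 : len (y₁ * d) ≤ k - 1 := by
      have h1 : len (mkw [j] : PB N) = 1 := by rw [len_mkw]; rfl
      have h2 : len z = len (mkw [j]) + len (y₁ * d) := by rw [← hd, len_mul]
      omega
    obtain ⟨m₁, hm₁⟩ := IH (k - 1) (by omega) (y₁ * d) y₁ (mkw (comp j i)) hz1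
      (dvd_mul_right _ _) ⟨t, ht2.symm⟩
    obtain ⟨hm1, hm2, hm3⟩ := hm₁
    refine ⟨mkw [j] * m₁, ?_, ?_, ?_⟩
    · -- mkw [i] divides
      obtain ⟨e, he⟩ := hm2
      refine ⟨mkw (comp i j) * e, ?_⟩
      rw [← mul_assoc, compM_rel i j, mul_assoc, he]
    · exact mul_dvd_mul_left _ hm1
    · intro z' h1 h2
      obtain ⟨c', hc'⟩ := h1
      obtain ⟨d', hd'⟩ := h2
      rw [mul_assoc] at hd'
      obtain ⟨t', ht1', ht2'⟩ := keyM (hc'.trans hd'.symm)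
      have : leftDvd m₁ (y₁ * d') := hm3 _ (dvd_mul_right _ _) ⟨t', ht2'.symm⟩
      exact dvd_trans (mul_dvd_mul_left (mkw [j]) this) ⟨1, by rw [mul_one, hd']⟩
  -- now the general case
  intro z x y hz hx hy
  by_cases hx1 : x = 1
  · subst hx1
    exact ⟨y, one_dvd _, dvd_refl _, fun z' _ h2 => h2⟩
  obtain ⟨i, x₁, rfl⟩ := decomp hx1
  obtain ⟨m₀, hm₀⟩ := T z i y hz (dvd_trans (dvd_mul_right _ _) hx) hy
  obtain ⟨hm01, hm02, hm03⟩ := hm₀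
  obtain ⟨b', rfl⟩ := hm01
  obtain ⟨c, hc⟩ := hx
  rw [mul_assoc] at hc
  -- z = mkw [i] * (x₁ * c)
  have hk1 : 1 ≤ k := by
    have := len_le_of_dvd ⟨x₁ * c, hc⟩
    have h1 : len (mkw [i] : PB N) = 1 := by rw [len_mkw]; rfl
    omega
  have hz1 : len (x₁ * c) ≤ k - 1 := by
    have h1 : len (mkw [i] : PB N) = 1 := by rw [len_mkw]; rfl
    have h2 : len z = len (mkw [i]) + len (x₁ * c) := by rw [← hc, len_mul]
    omega
  have hb' : leftDvd b' (x₁ * c) := by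
    obtain ⟨g, hg⟩ := hm03 z ⟨x₁ * c, hc⟩ hy
    refine dvd_of_mul_dvd_mul_left (x := mkw [i]) ⟨g, ?_⟩
    rw [hg, ← hc]
  obtain ⟨m₁, hm₁⟩ := IH (k - 1) (by omega) (x₁ * c) x₁ b' hz1 (dvd_mul_right _ _) hb'
  obtain ⟨hm11, hm12, hm13⟩ := hm₁
  refine ⟨mkw [i] * m₁, mul_dvd_mul_left _ hm11,
    dvd_trans hm02 (mul_dvd_mul_left _ hm12), ?_⟩
  intro z' h1 h2
  obtain ⟨c', hc'⟩ := h1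
  rw [mul_assoc] at hc'
  have hiz' : leftDvd (mkw [i]) z' := ⟨x₁ * c', hc'⟩
  have hm0z' : leftDvd (mkw [i] * b') z' := hm03 z' hiz' h2
  obtain ⟨g, hg⟩ := hm0z'
  rw [mul_assoc] at hg
  have hx₁ : leftDvd x₁ (x₁ * c') := dvd_mul_right _ _
  have hb'2 : leftDvd b' (x₁ * c') := by
    refine dvd_of_mul_dvd_mul_left (x := mkw [i]) ⟨g, ?_⟩
    rw [← mul_assoc] at hg
    rw [hg, ← hc']
  have := hm13 (x₁ * c') hx₁ hb'2
  obtain ⟨e, he⟩ := this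
  exact ⟨e, by rw [mul_assoc, he, hc']⟩

end Garside


namespace Garside
variable {N : ℕ}

lemma finite_len_le (L : ℕ) : {x : PB N | len x ≤ L}.Finite := by
  have h1 : {l : List (Fin N) | l.length ≤ L}.Finite := List.finite_length_le _ _
  refine Set.Finite.subset (h1.image mkw) ?_
  intro x hx
  obtain ⟨l, rfl⟩ := exists_rep x
  exact ⟨l, by simpa [len_mkw] using hx, rfl⟩

/-- the set of common left divisors has a greatest element -/
lemma glb_exists (a b : PB N) : ∃ m, leftDvd m a ∧ leftDvd m b ∧
    ∀ c, leftDvd c a → leftDvd c b → leftDvd c m := by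
  set D := {c : PB N | leftDvd c a ∧ leftDvd c b} with hD
  have hfin : D.Finite := (finite_len_le (len a)).subset (fun c hc => len_le_of_dvd hc.1)
  have main : ∀ (L : List (PB N)), (∀ c ∈ L, c ∈ D) →
      ∃ m, m ∈ D ∧ ∀ c ∈ L, leftDvd c m := by
    intro L
    induction L with
    | nil => exact fun _ => ⟨1, ⟨one_dvd a, one_dvd b⟩, by simp⟩
    | cons c L' ih =>
        intro hmem
        obtain ⟨m', hm'D, hm'⟩ := ih (fun d hd => hmem d (List.mem_cons_of_mem _ hd))
        have hcD := hmem c List.mem_cons_self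
        obtain ⟨m, hm1, hm2, hm3⟩ := lcm_exists (len a) a c m' le_rfl hcD.1 hm'D.1
        refine ⟨m, ⟨hm3 a hcD.1 hm'D.1, hm3 b hcD.2 hm'D.2⟩, ?_⟩
        intro d hd
        rcases List.mem_cons.mp hd with rfl | hd
        · exact hm1
        · exact dvd_trans (hm' d hd) hm2
  obtain ⟨m, hmD, hm⟩ := main hfin.toFinset.toList (fun c hc =>
    hfin.mem_toFinset.mp (Finset.mem_toList.mp hc))
  exact ⟨m, hmD.1, hmD.2,
    fun c h1 h2 => hm c (Finset.mem_toList.mpr (hfin.mem_toFinset.mpr ⟨h1, h2⟩))⟩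

end Garside

/-- In the positive braid monoid `Bₙ⁺`, left-divisibility is a partial order, and the
interval `[1, Δ]` of left-divisors of the half twist `Δ` is a lattice: any two of its
elements admit a greatest lower bound and a least upper bound within `[1, Δ]`. -/
theorem statement11 (n : ℕ) (hn : 2 ≤ n) :
    (∀ a : BraidMonoid n, leftDvd a a) ∧
    (∀ a b c : BraidMonoid n, leftDvd a b → leftDvd b c → leftDvd a c) ∧
    (∀ a b : BraidMonoid n, leftDvd a b → leftDvd b a → a = b) ∧
    (∀ a b : BraidMonoid n, leftDvd a (braidDelta n) → leftDvd b (braidDelta n) →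
      (∃ m, leftDvd m (braidDelta n) ∧ leftDvd m a ∧ leftDvd m b ∧
        ∀ c, leftDvd c (braidDelta n) → leftDvd c a → leftDvd c b → leftDvd c m) ∧
      (∃ u, leftDvd u (braidDelta n) ∧ leftDvd a u ∧ leftDvd b u ∧
        ∀ c, leftDvd c (braidDelta n) → leftDvd a c → leftDvd b c → leftDvd u c)) := by
  refine ⟨fun a => Garside.dvd_refl a,
    fun a b c h1 h2 => Garside.dvd_trans h1 h2, ?_, ?_⟩
  · intro a b h1 h2
    obtain ⟨c, hc⟩ := h1
    obtain ⟨d, hd⟩ := h2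
    have l1 := congrArg Garside.len hc
    have l2 := congrArg Garside.len hd
    rw [Garside.len_mul] at l1 l2
    have hc0 : Garside.len c = 0 := by omega
    rw [Garside.eq_one_of_len_eq_zero hc0, mul_one] at hc
    exact hc
  · intro a b ha hb
    constructor
    · obtain ⟨m, h1, h2, h3⟩ := Garside.glb_exists a b
      exact ⟨m, Garside.dvd_trans h1 ha, h1, h2, fun c _ hca hcb => h3 c hca hcb⟩
    · obtain ⟨u, h1, h2, h3⟩ := Garside.lcm_exists (Garside.len (braidDelta n))
        (braidDelta n) a b le_rfl ha hb
      exact ⟨u, h3 _ ha hb, h1, h2, fun c _ hac hbc => h3 c hac hbc⟩
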